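/- Let 𝓘 be a p-normed operator ideal. If T : E_1 × ⋯ × E_{n+1} → F is 𝓘-bounded, i.e., there exist a Banach space H and u ∈ 𝓘(H;F) with T(B_{E_1} × ⋯ × B_{E_{n+1}}) ⊆ u(B_H), then for every a_1 ∈ E_1 the n-linear map T_{a_1}(x_2,...,x_{n+1}) = T(a_1,x_2,...,x_{n+1}) is 𝓘-bounded, and ‖T_{a_1}‖_{𝓛_{⟨𝓘⟩}} ≤ ‖T‖_{𝓛_{⟨𝓘⟩}}·‖a_1‖, where ‖T‖_{𝓛_{⟨𝓘⟩}} = inf{‖u‖_𝓘 : u witnesses the 𝓘-boundedness of T}. -/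

import Mathlib

open Metric Pointwise

universe u

structure BanachSp (𝕜 : Type u) [NontriviallyNormedField 𝕜] : Type (u + 1) where
  carrier : Type u
  [grp : NormedAddCommGroup carrier]
  [mod : NormedSpace 𝕜 carrier]
  [comp : CompleteSpace carrier]

attribute [instance] BanachSp.grp BanachSp.mod BanachSp.comp

/-- if `T : E₁ × ⋯ × E_{n+1} → F` is `𝓘`-bounded
(`T(B_{E₁} × ⋯ × B_{E_{n+1}}) ⊆ u(B_H)` for some `u ∈ 𝓘(H;F)`), then for every
`a₁ ∈ E₁` the restricted `n`-linear map `T_{a₁}` is `𝓘`-bounded and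
`‖T_{a₁}‖_{𝓛⟨𝓘⟩} ≤ ‖T‖_{𝓛⟨𝓘⟩} ‖a₁‖`, where `‖·‖_{𝓛⟨𝓘⟩}` is the infimum of `‖u‖_𝓘`
over all witnesses `u`. -/
theorem stmt13 (𝕜 : Type u) [RCLike 𝕜]
    (I : ∀ G F : BanachSp 𝕜, Set (G.carrier →L[𝕜] F.carrier))
    (NI : ∀ G F : BanachSp 𝕜, (G.carrier →L[𝕜] F.carrier) → ℝ)
    (hNI : ∀ (G F : BanachSp 𝕜) (u : G.carrier →L[𝕜] F.carrier), 0 ≤ NI G F u)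
    -- the ideal `𝓘` is closed under scalar multiples, with homogeneous `p`-norm:
    (hIsmul : ∀ (G F : BanachSp 𝕜) (c : 𝕜) (u : G.carrier →L[𝕜] F.carrier),
      u ∈ I G F → c • u ∈ I G F)
    (hNIsmul : ∀ (G F : BanachSp 𝕜) (c : 𝕜) (u : G.carrier →L[𝕜] F.carrier),
      NI G F (c • u) = ‖c‖ * NI G F u)
    {n : ℕ} (E : Fin (n + 1) → Type u) (F : Type u)
    [∀ i, NormedAddCommGroup (E i)] [∀ i, NormedSpace 𝕜 (E i)] [∀ i, CompleteSpace (E i)]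
    [NormedAddCommGroup F] [NormedSpace 𝕜 F] [CompleteSpace F]
    (T : ContinuousMultilinearMap 𝕜 E F)
    (hT : ∃ (H : BanachSp 𝕜), ∃ u ∈ I H (BanachSp.mk F),
      ∀ x : ∀ i, E i, (∀ i, ‖x i‖ ≤ 1) → T x ∈ u '' closedBall 0 1)
    (a : E 0)
    (Tres : ContinuousMultilinearMap 𝕜 (fun i : Fin n => E i.succ) F)
    (hres : ∀ v, Tres v = T (Fin.cons a v)) :
    (∃ (H : BanachSp 𝕜), ∃ u ∈ I H (BanachSp.mk F),
      ∀ x : ∀ i : Fin n, E i.succ, (∀ i, ‖x i‖ ≤ 1) → Tres x ∈ u '' closedBall 0 1) ∧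
    sInf {r : ℝ | ∃ (H : BanachSp 𝕜), ∃ u ∈ I H (BanachSp.mk F),
        (∀ x : ∀ i : Fin n, E i.succ, (∀ i, ‖x i‖ ≤ 1) → Tres x ∈ u '' closedBall 0 1) ∧
        r = NI H (BanachSp.mk F) u} ≤
      sInf {r : ℝ | ∃ (H : BanachSp 𝕜), ∃ u ∈ I H (BanachSp.mk F),
        (∀ x : ∀ i, E i, (∀ i, ‖x i‖ ≤ 1) → T x ∈ u '' closedBall 0 1) ∧
        r = NI H (BanachSp.mk F) u} * ‖a‖ := by
  classical
  -- common construction: any witness for T gives a witness for Tres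
  have key : ∀ (H : BanachSp 𝕜) (u : H.carrier →L[𝕜] F), u ∈ I H (BanachSp.mk F) →
      (∀ x : ∀ i, E i, (∀ i, ‖x i‖ ≤ 1) → T x ∈ u '' closedBall 0 1) →
      ((‖a‖ : 𝕜) • u) ∈ I H (BanachSp.mk F) ∧
      (∀ x : ∀ i : Fin n, E i.succ, (∀ i, ‖x i‖ ≤ 1) →
        Tres x ∈ ((‖a‖ : 𝕜) • u) '' closedBall 0 1) ∧
      NI H (BanachSp.mk F) ((‖a‖ : 𝕜) • u) = ‖a‖ * NI H (BanachSp.mk F) u := by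
    intro H u hu hw
    refine ⟨hIsmul _ _ _ _ hu, ?_, by
      rw [hNIsmul]; congr 1; rw [RCLike.norm_ofReal, abs_of_nonneg (norm_nonneg a)]⟩
    intro x hx
    rcases eq_or_ne a 0 with rfl | ha
    · refine ⟨0, by simpa using zero_le_one, ?_⟩
      have : Tres x = 0 := by
        rw [hres]
        exact T.map_coord_zero 0 (by simp)
      simp [this]
    · set c : 𝕜 := (‖a‖ : 𝕜) with hc
      have hc0 : c ≠ 0 := by
        simp [hc, RCLike.ofReal_eq_zero, norm_eq_zero, ha]
      set b : E 0 := c⁻¹ • a with hb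
      have hab : a = c • b := by
        rw [hb, smul_smul, mul_inv_cancel₀ hc0, one_smul]
      have hbn : ‖b‖ ≤ 1 := by
        rw [hb, norm_smul, norm_inv, hc, RCLike.norm_ofReal, abs_of_nonneg (norm_nonneg a),
          inv_mul_cancel₀ (norm_ne_zero_iff.mpr ha)]
      obtain ⟨y, hy, hy2⟩ := hw (Fin.cons b x) (by
        intro i
        refine Fin.cases ?_ ?_ i
        · simpa using hbn
        · intro j; simpa using hx j)
      refine ⟨y, hy, ?_⟩
      have : T (Fin.cons a x) = c • T (Fin.cons b x) := by
        conv_lhs => rw [hab, ← Fin.update_cons_zero b x (c • b)]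
        rw [T.map_update_smul (Fin.cons b x) 0 c b, Fin.update_cons_zero]
      rw [ContinuousLinearMap.smul_apply, hy2, hres, this]
  obtain ⟨H, u, hu, hw⟩ := hT
  obtain ⟨hu', hw', _⟩ := key H u hu hw
  refine ⟨⟨H, _, hu', hw'⟩, ?_⟩
  set S1 := {r : ℝ | ∃ (H : BanachSp 𝕜), ∃ u ∈ I H (BanachSp.mk F),
      (∀ x : ∀ i : Fin n, E i.succ, (∀ i, ‖x i‖ ≤ 1) → Tres x ∈ u '' closedBall 0 1) ∧
      r = NI H (BanachSp.mk F) u} with hS1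
  set S2 := {r : ℝ | ∃ (H : BanachSp 𝕜), ∃ u ∈ I H (BanachSp.mk F),
      (∀ x : ∀ i, E i, (∀ i, ‖x i‖ ≤ 1) → T x ∈ u '' closedBall 0 1) ∧
      r = NI H (BanachSp.mk F) u} with hS2
  have hsub : ‖a‖ • S2 ⊆ S1 := by
    rintro r ⟨s, ⟨H', u', hu', hw1, rfl⟩, rfl⟩
    obtain ⟨h1, h2, h3⟩ := key H' u' hu' hw1
    exact ⟨H', _, h1, h2, h3.symm⟩
  have hbdd : BddBelow S1 := by
    refine ⟨0, ?_⟩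
    rintro r ⟨H', u', _, _, rfl⟩
    exact hNI _ _ _
  have hne2 : S2.Nonempty := ⟨_, H, u, hu, hw, rfl⟩
  calc sInf S1 ≤ sInf (‖a‖ • S2) := csInf_le_csInf hbdd (hne2.smul_set) hsub
    _ = ‖a‖ • sInf S2 := Real.sInf_smul_of_nonneg (norm_nonneg a) S2
    _ = sInf S2 * ‖a‖ := by rw [smul_eq_mul, mul_comm]
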